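/- arXiv:1501.05998 — 2 statements merged into one kernel-verified Lean document; each statement's English description precedes it below -/
import Mathlib

section
/- Let b ≥ 2 and N ≥ 1 be integers and let n be a non-negative integer with n < b^N. Then for all real x and y: ∏_{j=1}^{b-1} binom(x+y+j-1, j)^{μ_j(n)} = ∑_{0 ≤ m ⪯ n} [ ∏_{j=1}^{b-1} binom(x+j-1, j)^{μ_j(m)} · ∏_{j=1}^{b-1} binom(y+j-1, j)^{μ_j(n-m)} ], where the sum is over all m with m ⪯ n in base b. -/
/-- The generalized binomial coefficient `binom(x,k) = x(x-1)⋯(x-k+1)/k!`. -/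
noncomputable def binom (x : ℝ) (k : ℕ) : ℝ :=
  (∏ i ∈ Finset.range k, (x - i)) / (Nat.factorial k)

/-- `dig b n i` is the `i`-th digit of `n` in base `b`. -/
def dig (b n i : ℕ) : ℕ := n / b ^ i % b

/-- `mult b j n` is the multiplicity `μ_j(n)` of the digit `j` in the base-`b` expansion of `n`. -/
def mult (b j n : ℕ) : ℕ := (Nat.digits b n).count j

open Finset Polynomial

lemma smeval_descPochhammer_real (x : ℝ) (k : ℕ) :
    (descPochhammer ℤ k).smeval x = ∏ i ∈ Finset.range k, (x - i) := by
  induction k with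
  | zero => simp [descPochhammer_zero, smeval_one]
  | succ k ih =>
    rw [descPochhammer_succ_right, smeval_mul, ih, Finset.prod_range_succ]
    congr 1
    rw [smeval_sub, smeval_X, smeval_natCast]
    simp

lemma binom_eq_choose (x : ℝ) (k : ℕ) : binom x k = Ring.choose x k := by
  have h := Ring.descPochhammer_eq_factorial_smul_choose (R := ℝ) x k
  rw [smeval_descPochhammer_real] at h
  rw [binom, h, nsmul_eq_mul]
  field_simp

/-- Vandermonde for real binomial coefficients. -/
lemma binom_vandermonde (r s : ℝ) (k : ℕ) :
    binom (r + s) k = ∑ e ∈ Finset.range (k + 1), binom r e * binom s (k - e) := by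
  rw [binom_eq_choose, Ring.add_choose_eq k (Commute.all r s),
    Finset.Nat.sum_antidiagonal_eq_sum_range_succ_mk]
  exact Finset.sum_congr rfl fun e _ => by rw [binom_eq_choose, binom_eq_choose]

lemma prod_shift (x : ℝ) : ∀ e : ℕ,
    ∏ i ∈ Finset.range e, (x + e - 1 - i) = ∏ i ∈ Finset.range e, (x + i) := by
  intro e
  induction e with
  | zero => simp
  | succ e ih =>
    rw [Finset.prod_range_succ' (fun i => (x + (e+1:ℕ) - 1 - i)), Finset.prod_range_succ]
    have h1 : ∀ i : ℕ, x + ((e:ℝ)+1) - 1 - ((i:ℝ)+1) = x + e - 1 - i := by intro i; ring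
    push_cast
    rw [Finset.prod_congr rfl (fun i _ => h1 i), ih]
    ring

lemma binom_neg_eq (x : ℝ) (e : ℕ) : binom (x + e - 1) e = (-1) ^ e * binom (-x) e := by
  unfold binom
  rw [prod_shift]
  have h : ∏ i ∈ Finset.range e, (-x - (i:ℝ)) = (-1) ^ e * ∏ i ∈ Finset.range e, (x + i) := by
    have h1 : ∀ i ∈ Finset.range e, (-x - (i:ℝ)) = (-1) * (x + i) := fun i _ => by ring
    rw [Finset.prod_congr rfl h1, Finset.prod_mul_distrib, Finset.prod_const,
      Finset.card_range]
  rw [h, ← mul_div_assoc, ← mul_assoc, ← mul_pow]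
  norm_num

/-- Shifted (multiset) Vandermonde. -/
lemma binom_svand (x y : ℝ) (d : ℕ) :
    binom (x + y + d - 1) d =
      ∑ e ∈ Finset.range (d + 1), binom (x + e - 1) e * binom (y + (d - e : ℕ) - 1) (d - e) := by
  have h := binom_vandermonde (-x) (-y) d
  have hxy : binom (x + y + d - 1) d = (-1) ^ d * binom (-x + -y) d := by
    have := binom_neg_eq (x + y) d
    rw [show -(x+y) = -x + -y by ring] at this
    linarith [this]
  rw [hxy, h, Finset.mul_sum]
  refine Finset.sum_congr rfl fun e he => ?_
  have hed : e ≤ d := Nat.lt_succ_iff.mp (Finset.mem_range.mp he)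
  rw [binom_neg_eq x e, binom_neg_eq y (d - e)]
  rw [show (-1:ℝ)^e * binom (-x) e * ((-1:ℝ)^(d-e) * binom (-y) (d-e))
      = ((-1:ℝ)^e * (-1:ℝ)^(d-e)) * (binom (-x) e * binom (-y) (d-e)) by ring,
    ← pow_add, Nat.add_sub_cancel' hed]

lemma dig_zero (b m : ℕ) : dig b m 0 = m % b := by simp [dig]

lemma dig_succ (b m i : ℕ) : dig b m (i + 1) = dig b (m / b) i := by
  simp [dig, pow_succ, Nat.div_div_eq_div_mul, mul_comm]

lemma dom_le (b : ℕ) (hb : 2 ≤ b) : ∀ m n : ℕ, (∀ i, dig b m i ≤ dig b n i) → m ≤ n := by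
  intro m
  induction m using Nat.strong_induction_on with
  | _ m ih =>
    intro n h
    rcases Nat.eq_zero_or_pos m with hm | hm
    · omega
    · have hdiv : m / b < m := Nat.div_lt_self hm (by omega)
      have h1 : m / b ≤ n / b := ih (m / b) hdiv (n / b) (fun i => by
        have := h (i + 1); rwa [dig_succ, dig_succ] at this)
      have h0 : m % b ≤ n % b := by have := h 0; rwa [dig_zero, dig_zero] at this
      have h2 : b * (m / b) ≤ b * (n / b) := Nat.mul_le_mul_left b h1
      have em : m = b * (m / b) + m % b := (Nat.div_add_mod m b).symm
      have en : n = b * (n / b) + n % b := (Nat.div_add_mod n b).symm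
      omega

lemma mult_zero (b j : ℕ) : mult b j 0 = 0 := by simp [mult]

lemma mult_rec (b j e m : ℕ) (hb : 2 ≤ b) (hj : j ≠ 0) (he : e < b) :
    mult b j (e + b * m) = (if e = j then 1 else 0) + mult b j m := by
  rcases Nat.eq_zero_or_pos (e + b * m) with h0 | h0
  · have he0 : e = 0 := by omega
    have hm0 : m = 0 := by
      rcases Nat.eq_zero_or_pos m with h | h
      · exact h
      · exfalso; nlinarith
    subst he0; subst hm0
    simp [mult, Ne.symm hj]
  · rw [mult, Nat.digits_def' (by omega : 1 < b) h0]
    have h1 : (e + b * m) % b = e := by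
      rw [Nat.add_mul_mod_self_left, Nat.mod_eq_of_lt he]
    have h2 : (e + b * m) / b = m := by
      rw [Nat.add_mul_div_left _ _ (by omega : 0 < b), Nat.div_eq_of_lt he, Nat.zero_add]
    rw [h1, h2, List.count_cons]
    rw [mult]
    simp only [beq_iff_eq]
    omega

lemma prod_single_digit (b : ℕ) (hb : 2 ≤ b) (x : ℝ) (e : ℕ) (he : e < b) :
    ∏ j ∈ Finset.Icc 1 (b - 1), (binom (x + j - 1) j) ^ (if e = j then 1 else 0) =
      binom (x + e - 1) e := by
  rcases Nat.eq_zero_or_pos e with he0 | he0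
  · subst he0
    have : ∀ j ∈ Finset.Icc 1 (b - 1), (binom (x + j - 1) j) ^ (if 0 = j then 1 else 0) = 1 := by
      intro j hj
      have : j ≠ 0 := by have := Finset.mem_Icc.mp hj; omega
      simp [Ne.symm this]
    rw [Finset.prod_congr rfl this, Finset.prod_const_one]
    simp [binom]
  · rw [Finset.prod_eq_single e]
    · simp
    · intro j hj hje
      simp [Ne.symm hje]
    · intro hne
      exfalso
      exact hne (Finset.mem_Icc.mpr ⟨he0, by omega⟩)

lemma prod_mult_rec (b : ℕ) (hb : 2 ≤ b) (x : ℝ) (e m : ℕ) (he : e < b) :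
    ∏ j ∈ Finset.Icc 1 (b - 1), (binom (x + j - 1) j) ^ mult b j (e + b * m) =
      binom (x + e - 1) e * ∏ j ∈ Finset.Icc 1 (b - 1), (binom (x + j - 1) j) ^ mult b j m := by
  rw [← prod_single_digit b hb x e he, ← Finset.prod_mul_distrib]
  refine Finset.prod_congr rfl fun j hj => ?_
  have hj1 : j ≠ 0 := by have := Finset.mem_Icc.mp hj; omega
  rw [mult_rec b j e m hb hj1 he, pow_add]

open Classical in
lemma key (b : ℕ) (hb : 2 ≤ b) : ∀ N n, n < b ^ N → ∀ x y : ℝ,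
    ∏ j ∈ Finset.Icc 1 (b - 1), binom (x + y + j - 1) j ^ mult b j n =
      ∑ m ∈ (Finset.range (n + 1)).filter (fun m => ∀ i, dig b m i ≤ dig b n i),
        (∏ j ∈ Finset.Icc 1 (b - 1), binom (x + j - 1) j ^ mult b j m) *
          ∏ j ∈ Finset.Icc 1 (b - 1), binom (y + j - 1) j ^ mult b j (n - m) := by
  intro N
  induction N with
  | zero =>
    intro n hn x y
    have hn0 : n = 0 := by simpa using hn
    subst hn0
    have : (Finset.range 1).filter (fun m => ∀ i, dig b m i ≤ dig b 0 i) = {0} := by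
      apply Finset.eq_singleton_iff_unique_mem.mpr
      constructor
      · simp [Finset.mem_filter]
      · intro m hm
        have := (Finset.mem_filter.mp hm).1
        simpa using this
    rw [this]
    simp [mult_zero]
  | succ N ih =>
    intro n hn x y
    set d := n % b with hd
    set q := n / b with hq
    have hdb : d < b := Nat.mod_lt _ (by omega)
    have hqN : q < b ^ N := by
      rw [hq, Nat.div_lt_iff_lt_mul (by omega : 0 < b)]
      calc n < b ^ (N + 1) := hn
        _ = b ^ N * b := by ring
    have hnq : n = d + b * q := by rw [hd, hq, Nat.add_comm]; exact (Nat.div_add_mod n b).symm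
    -- rewrite the sum via the bijection m ↦ (m % b, m / b)
    have hsum :
        ∑ m ∈ (Finset.range (n + 1)).filter (fun m => ∀ i, dig b m i ≤ dig b n i),
          (∏ j ∈ Finset.Icc 1 (b - 1), binom (x + j - 1) j ^ mult b j m) *
            ∏ j ∈ Finset.Icc 1 (b - 1), binom (y + j - 1) j ^ mult b j (n - m) =
        ∑ p ∈ (Finset.range (d + 1)) ×ˢ
            ((Finset.range (q + 1)).filter (fun m' => ∀ i, dig b m' i ≤ dig b q i)),
          (binom (x + p.1 - 1) p.1 * binom (y + (d - p.1 : ℕ) - 1) (d - p.1)) *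
            ((∏ j ∈ Finset.Icc 1 (b - 1), binom (x + j - 1) j ^ mult b j p.2) *
              ∏ j ∈ Finset.Icc 1 (b - 1), binom (y + j - 1) j ^ mult b j (q - p.2)) := by
      refine Finset.sum_nbij' (fun m => (m % b, m / b)) (fun p => p.1 + b * p.2) ?_ ?_ ?_ ?_ ?_
      · intro m hm
        obtain ⟨hm1, hm2⟩ := Finset.mem_filter.mp hm
        have h0 : m % b ≤ d := by have := hm2 0; rwa [dig_zero, dig_zero] at this
        have hdom : ∀ i, dig b (m / b) i ≤ dig b q i := fun i => by
          have := hm2 (i + 1); rwa [dig_succ, dig_succ] at this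
        have hle : m / b ≤ q := dom_le b hb _ _ hdom
        exact Finset.mem_product.mpr ⟨Finset.mem_range.mpr (by omega),
          Finset.mem_filter.mpr ⟨Finset.mem_range.mpr (by omega), hdom⟩⟩
      · intro p hp
        obtain ⟨hp1, hp2⟩ := Finset.mem_product.mp hp
        have he : p.1 ≤ d := by have := Finset.mem_range.mp hp1; omega
        obtain ⟨hp2r, hp2d⟩ := Finset.mem_filter.mp hp2
        have hm' : p.2 ≤ q := by have := Finset.mem_range.mp hp2r; omega
        have hmn : p.1 + b * p.2 ≤ n := by
          calc p.1 + b * p.2 ≤ d + b * q := Nat.add_le_add he (Nat.mul_le_mul_left b hm')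
            _ = n := hnq.symm
        refine Finset.mem_filter.mpr ⟨Finset.mem_range.mpr (by omega), ?_⟩
        intro i
        cases i with
        | zero =>
          rw [dig_zero, dig_zero, Nat.add_mul_mod_self_left, Nat.mod_eq_of_lt (by omega), ← hd]
          exact he
        | succ i =>
          rw [dig_succ, dig_succ,
            Nat.add_mul_div_left _ _ (by omega : 0 < b), Nat.div_eq_of_lt (by omega),
            Nat.zero_add]
          have := hp2d i
          rw [hnq, show (d + b * q) / b = q by
            rw [Nat.add_mul_div_left _ _ (by omega : 0 < b), Nat.div_eq_of_lt hdb]; omega]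
          exact this
      · intro m _; dsimp only; exact (Nat.mod_add_div m b)
      · intro p hp
        obtain ⟨hp1, _⟩ := Finset.mem_product.mp hp
        have he : p.1 < b := by have := Finset.mem_range.mp hp1; omega
        ext
        · simp only
          rw [Nat.add_mul_mod_self_left, Nat.mod_eq_of_lt he]
        · simp only
          rw [Nat.add_mul_div_left _ _ (by omega : 0 < b), Nat.div_eq_of_lt he]; omega
      · intro m hm
        dsimp only
        obtain ⟨hm1, hm2⟩ := Finset.mem_filter.mp hm
        have h0 : m % b ≤ d := by have := hm2 0; rwa [dig_zero, dig_zero] at this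
        have hdom : ∀ i, dig b (m / b) i ≤ dig b q i := fun i => by
          have := hm2 (i + 1); rwa [dig_succ, dig_succ] at this
        have hle : m / b ≤ q := dom_le b hb _ _ hdom
        have hmeq : m = m % b + b * (m / b) := by
          rw [Nat.add_comm]; exact (Nat.div_add_mod m b).symm
        have hbs : b * (m / b) ≤ b * q := Nat.mul_le_mul_left b hle
        have hsub : n - m = (d - m % b) + b * (q - m / b) := by
          rw [hnq]; nth_rewrite 1 [hmeq]
          rw [Nat.mul_sub_left_distrib, Nat.sub_add_eq, Nat.sub_add_comm h0,
            Nat.add_sub_assoc hbs]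
        rw [show (∏ j ∈ Finset.Icc 1 (b - 1), binom (x + j - 1) j ^ mult b j m) =
            ∏ j ∈ Finset.Icc 1 (b - 1), binom (x + j - 1) j ^ mult b j (m % b + b * (m / b)) by
          rw [← hmeq]]
        rw [hsub, prod_mult_rec b hb x (m % b) (m / b) (by omega),
          prod_mult_rec b hb y (d - m % b) (q - m / b) (by omega)]
        ring
    rw [hsum, Finset.sum_product]
    have hfact : ∀ e ∈ Finset.range (d + 1),
        ∑ m' ∈ (Finset.range (q + 1)).filter (fun m' => ∀ i, dig b m' i ≤ dig b q i),
          (binom (x + e - 1) e * binom (y + (d - e : ℕ) - 1) (d - e)) *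
            ((∏ j ∈ Finset.Icc 1 (b - 1), binom (x + j - 1) j ^ mult b j m') *
              ∏ j ∈ Finset.Icc 1 (b - 1), binom (y + j - 1) j ^ mult b j (q - m')) =
        (binom (x + e - 1) e * binom (y + (d - e : ℕ) - 1) (d - e)) *
          ∏ j ∈ Finset.Icc 1 (b - 1), binom (x + y + j - 1) j ^ mult b j q := by
      intro e _
      rw [← Finset.mul_sum, ← ih q hqN x y]
    rw [Finset.sum_congr rfl hfact, ← Finset.sum_mul, ← binom_svand x y d]
    -- now the LHS
    rw [show (∏ j ∈ Finset.Icc 1 (b - 1), binom (x + y + j - 1) j ^ mult b j n) =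
        ∏ j ∈ Finset.Icc 1 (b - 1), binom (x + y + j - 1) j ^ mult b j (d + b * q) by
      rw [← hnq]]
    rw [prod_mult_rec b hb (x + y) d q hdb]

open Classical in
/-- For `b ≥ 2`, `N ≥ 1`, `n < b^N` and all real `x, y`:
`∏_{j=1}^{b-1} binom(x+y+j-1, j)^{μ_j(n)} = ∑_{0 ≤ m ⪯ n} ∏_{j=1}^{b-1} binom(x+j-1, j)^{μ_j(m)}
· ∏_{j=1}^{b-1} binom(y+j-1, j)^{μ_j(n-m)}`, the sum over all `m` digitally dominated by `n`
in base `b`. -/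
theorem digital_binomial_theorem_multiplicities (b N : ℕ) (hb : 2 ≤ b) (hN : 1 ≤ N)
    (n : ℕ) (hn : n < b ^ N) (x y : ℝ) :
    ∏ j ∈ Finset.Icc 1 (b - 1), binom (x + y + j - 1) j ^ mult b j n =
      ∑ m ∈ (Finset.range (n + 1)).filter (fun m => ∀ i, dig b m i ≤ dig b n i),
        (∏ j ∈ Finset.Icc 1 (b - 1), binom (x + j - 1) j ^ mult b j m) *
          ∏ j ∈ Finset.Icc 1 (b - 1), binom (y + j - 1) j ^ mult b j (n - m) := by
  exact key b hb N n hn x y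
end

section
/- Let b ≥ 2 and N ≥ 1 be integers, let A = (a_0, …, a_{b-1}) be a zero-sum vector of complex numbers, and let c = (c_0, …, c_{b^N-1}) be any vector of complex numbers with associated polynomial P(x) = ∑_{n=0}^{b^N-1} c_n x^n. Then the polynomial identity ∑_{n=0}^{b^N-1} a_{u_b(n)} x^n = P(x) · ∏_{m=0}^{N-1} (1 - x^{b^m}) holds if and only if both: (i) the vector a_N with entries a_{u_b(n)}, 0 ≤ n ≤ b^N-1, satisfies a_N = M_N c, and (ii) c_n = 0 for every n, 0 ≤ n ≤ b^N-1, whose base-b expansion contains the digit b-1. -/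
/-- `ptm b n` is the generalized Prouhet–Thue–Morse sequence `u_b(n)`: the sum of the base-`b`
digits of `n`, reduced modulo `b`. -/
def ptm (b n : ℕ) : ℕ := (Nat.digits b n).sum % b

/-- The matrix `M_1`: the `b×b` lower-bidiagonal matrix with `1`'s on the diagonal and `-1`'s on
the subdiagonal. -/
def M1 (b : ℕ) : Matrix (Fin b) (Fin b) ℂ :=
  Matrix.of fun j k =>
    if (j : ℕ) = (k : ℕ) then 1 else if (j : ℕ) = (k : ℕ) + 1 then -1 else 0

/-- The equivalence `Fin b × Fin (b^N) ≃ Fin (b^(N+1))`, `(p, r) ↦ p·b^N + r`, used to index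
Kronecker products. -/
def pke (b N : ℕ) : Fin b × Fin (b ^ N) ≃ Fin (b ^ (N + 1)) :=
  finProdFinEquiv.trans (finCongr (by ring))

open Kronecker in
/-- The matrices `M_N`, defined recursively by `M_{N+1} = M_1 ⊗ M_N` (Kronecker product). -/
def Mmat (b : ℕ) : (N : ℕ) → Matrix (Fin (b ^ N)) (Fin (b ^ N)) ℂ
  | 0 => 1
  | N + 1 => Matrix.reindex (pke b N) (pke b N) (M1 b ⊗ₖ Mmat b N)

def shiftA (b q : ℕ) (a : Fin b → ℂ) : Fin b → ℂ := fun i => a ⟨(q + i) % b, Nat.mod_lt _ i.pos⟩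
noncomputable def cstar (b : ℕ) : (N : ℕ) → (Fin b → ℂ) → Fin (b ^ N) → ℂ
  | 0, a, _ => if h : 0 < b then a ⟨0, h⟩ else 0
  | N + 1, a, n => ∑ q ∈ Finset.range (((pke b N).symm n).1.val + 1),
      cstar b N (shiftA b q a) ((pke b N).symm n).2

lemma cstar_sum {b : ℕ} {ι : Type*} (N : ℕ) (s : Finset ι) (f : ι → Fin b → ℂ)
    (n : Fin (b ^ N)) :
    cstar b N (fun i => ∑ q ∈ s, f q i) n = ∑ q ∈ s, cstar b N (f q) n := by
  induction N generalizing f with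
  | zero =>
    simp only [cstar]
    split
    · rfl
    · simp
  | succ N ih =>
    simp only [cstar]
    rw [Finset.sum_comm]
    refine Finset.sum_congr rfl fun q' _ => ?_
    have : shiftA b q' (fun i => ∑ q ∈ s, f q i) = fun i => ∑ q ∈ s, shiftA b q' (f q) i := rfl
    rw [this]; exact ih _ _

lemma shiftA_sum_zero {b : ℕ} (hb : 2 ≤ b) (a : Fin b → ℂ) (ha : ∑ i, a i = 0) (q : ℕ) :
    ∑ i, shiftA b q a i = 0 := by
  haveI : NeZero b := ⟨by omega⟩
  rw [← ha]
  apply Fintype.sum_equiv (Equiv.addLeft (⟨q % b, Nat.mod_lt _ (by omega)⟩ : Fin b))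
  intro i
  unfold shiftA
  congr 1
  rw [Fin.ext_iff]
  simp [Fin.add_def, Nat.add_mod]

lemma sum_shiftA_eq_zero {b : ℕ} (hb : 2 ≤ b) (a : Fin b → ℂ) (ha : ∑ i, a i = 0) (i : Fin b) :
    ∑ q ∈ Finset.range b, shiftA b q a i = 0 := by
  haveI : NeZero b := ⟨by omega⟩
  rw [← Fin.sum_univ_eq_sum_range (fun q => shiftA b q a i) b, ← ha]
  apply Fintype.sum_equiv (Equiv.addRight i)
  intro q
  simp [shiftA, Fin.add_def]

lemma dig_of_ge {b n N i : ℕ} (hb : 2 ≤ b) (hn : n < b ^ N) (hi : N ≤ i) : dig b n i = 0 := by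
  have : n < b ^ i := lt_of_lt_of_le hn (Nat.pow_le_pow_right (by omega) hi)
  simp [dig, Nat.div_eq_of_lt this]

lemma dig_low {b N p r i : ℕ} (hb : 2 ≤ b) (hi : i < N) :
    dig b (p * b ^ N + r) i = dig b r i := by
  unfold dig
  have h1 : p * b ^ N = (p * b ^ (N - i) * b ^ i) := by
    rw [mul_assoc, ← pow_add]
    congr 2
    omega
  rw [h1, Nat.add_comm, Nat.add_mul_div_right _ _ (pow_pos (by omega : 0 < b) i)]
  have h2 : b ∣ b ^ (N - i) := dvd_pow_self b (by omega)
  obtain ⟨t, ht⟩ := h2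
  rw [ht]
  rw [show r / b ^ i + p * (b * t) = r / b ^ i + p * t * b by ring]
  simp [Nat.add_mul_mod_self_right]

lemma dig_high {b N p r : ℕ} (hb : 2 ≤ b) (hp : p < b) (hr : r < b ^ N) :
    dig b (p * b ^ N + r) N = p := by
  unfold dig
  rw [Nat.add_comm, Nat.add_mul_div_right _ _ (pow_pos (by omega : 0 < b) N),
    Nat.div_eq_of_lt hr]
  simp [Nat.mod_eq_of_lt hp]

lemma sum_digits_split {b : ℕ} (hb : 2 ≤ b) :
    ∀ (N r p : ℕ), r < b ^ N →
      (Nat.digits b (p * b ^ N + r)).sum = (Nat.digits b p).sum + (Nat.digits b r).sum := by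
  intro N
  induction N with
  | zero => intro r p hr; simp only [pow_zero, Nat.lt_one_iff] at hr; subst hr; simp
  | succ N ih =>
    intro r p hr
    rcases Nat.eq_zero_or_pos (p * b ^ (N + 1) + r) with h0 | h0
    · have hp : p = 0 := by
        rcases Nat.eq_zero_or_pos p with h | h
        · exact h
        · exfalso; nlinarith [Nat.one_le_two_pow (n := N)]
      have hr0 : r = 0 := by omega
      simp [hp, hr0]
    · rw [Nat.digits_def' (by omega : 1 < b) h0]
      have hdiv : (p * b ^ (N + 1) + r) / b = p * b ^ N + r / b := by
        rw [pow_succ, ← mul_assoc, Nat.add_comm, Nat.add_mul_div_right _ _ (by omega : 0 < b),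
          Nat.add_comm]
      have hmod : (p * b ^ (N + 1) + r) % b = r % b := by
        rw [pow_succ, ← mul_assoc]
        simp [Nat.add_comm, Nat.add_mul_mod_self_right]
      have hrb : r / b < b ^ N := by
        rw [Nat.div_lt_iff_lt_mul (by omega : 0 < b)]
        calc r < b ^ (N + 1) := hr
        _ = b ^ N * b := by ring
      rw [hdiv, hmod, List.sum_cons, ih _ p hrb]
      rcases Nat.eq_zero_or_pos r with hr0 | hr0
      · simp [hr0]
      · rw [Nat.digits_def' (by omega : 1 < b) hr0]
        simp; ring

lemma ptm_split {b N p r : ℕ} (hb : 2 ≤ b) (hp : p < b) (hr : r < b ^ N) :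
    (Nat.digits b (p * b ^ N + r)).sum % b = (p + (Nat.digits b r).sum) % b := by
  rw [sum_digits_split hb N r p hr]
  congr 2
  rcases Nat.eq_zero_or_pos p with h | h
  · simp [h]
  · rw [Nat.digits_def' (by omega : 1 < b) h, Nat.mod_eq_of_lt hp, Nat.div_eq_of_lt hp]
    simp

lemma pke_val (b N : ℕ) (p : Fin b) (r : Fin (b ^ N)) :
    ((pke b N) (p, r) : ℕ) = p * b ^ N + r := by
  simp [pke, finProdFinEquiv]; ring

open Kronecker in
lemma mulVec_reindex_kron {b N : ℕ} (A : Matrix (Fin b) (Fin b) ℂ)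
    (B : Matrix (Fin (b ^ N)) (Fin (b ^ N)) ℂ) (c : Fin (b ^ (N + 1)) → ℂ)
    (p : Fin b) (r : Fin (b ^ N)) :
    (Matrix.reindex (pke b N) (pke b N) (A ⊗ₖ B)).mulVec c ((pke b N) (p, r)) =
      ∑ q : Fin b, ∑ s : Fin (b ^ N), A p q * B r s * c ((pke b N) (q, s)) := by
  rw [Matrix.reindex_apply, Matrix.submatrix_mulVec_equiv]
  simp only [Function.comp_apply, Equiv.symm_apply_apply, Equiv.symm_symm,
    Matrix.mulVec, dotProduct, Fintype.sum_prod_type, Matrix.kroneckerMap_apply]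

lemma M1_row_partial {b : ℕ} (p : Fin b) (g : ℕ → ℂ) :
    ∑ q : Fin b, M1 b p q * (∑ q' ∈ Finset.range (q.val + 1), g q') = g p.val := by
  have key : ∀ q : Fin b, M1 b p q =
      (if q = p then 1 else 0) + (if (q : ℕ) + 1 = (p : ℕ) then -1 else 0) := by
    intro q
    simp only [M1, Matrix.of_apply, Fin.ext_iff]
    rcases lt_trichotomy (p : ℕ) (q : ℕ) with h | h | h
    · rw [if_neg (by omega), if_neg (by omega), if_neg (by omega), if_neg (by omega)]; ring
    · rw [if_pos (by omega), if_pos (by omega), if_neg (by omega)]; ring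
    · rcases Nat.eq_or_lt_of_le (Nat.succ_le_of_lt h) with h2 | h2
      · rw [if_neg (by omega), if_pos (by omega), if_neg (by omega), if_pos (by omega)]; ring
      · rw [if_neg (by omega), if_neg (by omega), if_neg (by omega), if_neg (by omega)]; ring
  simp only [key, add_mul, Finset.sum_add_distrib, ite_mul, one_mul, zero_mul, neg_mul,
    neg_zero]
  rw [Finset.sum_ite_eq' Finset.univ p, if_pos (Finset.mem_univ _)]
  rcases Nat.eq_zero_or_pos (p : ℕ) with hp | hp
  · have h2 : ∑ x : Fin b,
        (if (x : ℕ) + 1 = (p : ℕ) then -∑ q' ∈ Finset.range ((x : ℕ) + 1), g q' else 0) = 0 :=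
      Finset.sum_eq_zero fun x _ => if_neg (by omega)
    rw [h2, hp]
    simp
  · have h2 : ∑ x : Fin b,
        (if (x : ℕ) + 1 = (p : ℕ) then -∑ q' ∈ Finset.range ((x : ℕ) + 1), g q' else 0)
        = -∑ q' ∈ Finset.range (((p : ℕ) - 1) + 1), g q' := by
      rw [show (∑ x : Fin b,
            if (x : ℕ) + 1 = (p : ℕ) then -∑ q' ∈ Finset.range ((x : ℕ) + 1), g q' else 0)
          = ∑ x : Fin b, if x = (⟨(p : ℕ) - 1, by omega⟩ : Fin b) then
              -∑ q' ∈ Finset.range ((x : ℕ) + 1), g q' else 0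
        from Finset.sum_congr rfl fun x _ =>
          if_congr (by rw [Fin.ext_iff]; simp; omega) rfl rfl]
      rw [Finset.sum_ite_eq' Finset.univ (⟨(p : ℕ) - 1, by omega⟩ : Fin b)
          (fun x : Fin b => -∑ q' ∈ Finset.range ((x : ℕ) + 1), g q'), if_pos (Finset.mem_univ _)]
    rw [h2]
    have h3 : (p : ℕ) - 1 + 1 = (p : ℕ) := by omega
    rw [h3, Finset.sum_range_succ (n := (p : ℕ))]
    ring

open Kronecker in
lemma Mmat_mulVec_cstar {b : ℕ} (hb : 2 ≤ b) :
    ∀ (N : ℕ) (a : Fin b → ℂ),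
      (Mmat b N).mulVec (cstar b N a) =
        fun n : Fin (b ^ N) => a ⟨ptm b (n : ℕ), Nat.mod_lt _ (by omega)⟩ := by
  intro N
  induction N with
  | zero =>
    intro a; funext n
    rw [show (Mmat b 0) = 1 from rfl, Matrix.one_mulVec]
    have hn : (n : ℕ) = 0 := by have := n.isLt; simp only [pow_zero] at this; omega
    simp only [cstar]
    rw [dif_pos (by omega : 0 < b)]
    congr 1
    rw [Fin.ext_iff]
    simp [hn, ptm]
  | succ N ih =>
    intro a; funext n
    obtain ⟨⟨p, r⟩, rfl⟩ := (pke b N).surjective n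
    rw [show Mmat b (N + 1) = Matrix.reindex (pke b N) (pke b N) (M1 b ⊗ₖ Mmat b N) from rfl,
      mulVec_reindex_kron]
    have hc : ∀ (q : Fin b) (s : Fin (b ^ N)),
        cstar b (N + 1) a ((pke b N) (q, s)) =
          ∑ q' ∈ Finset.range (q.val + 1), cstar b N (shiftA b q' a) s := by
      intro q s; simp only [cstar, Equiv.symm_apply_apply]
    have hinner : ∀ q : Fin b,
        ∑ s : Fin (b ^ N), Mmat b N r s * cstar b (N + 1) a ((pke b N) (q, s)) =
          ∑ q' ∈ Finset.range (q.val + 1), a ⟨(q' + ptm b (r : ℕ)) % b, Nat.mod_lt _ (by omega)⟩ := by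
      intro q
      simp only [hc, Finset.mul_sum]
      rw [Finset.sum_comm]
      refine Finset.sum_congr rfl fun q' _ => ?_
      have := congrFun (ih (shiftA b q' a)) r
      simp only [Matrix.mulVec, dotProduct] at this
      rw [this]
      rfl
    calc ∑ q : Fin b, ∑ s : Fin (b ^ N),
          M1 b p q * Mmat b N r s * cstar b (N + 1) a ((pke b N) (q, s))
        = ∑ q : Fin b, M1 b p q * ∑ q' ∈ Finset.range (q.val + 1),
            a ⟨(q' + ptm b (r : ℕ)) % b, Nat.mod_lt _ (by omega)⟩ := by
          refine Finset.sum_congr rfl fun q _ => ?_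
          rw [← hinner q, Finset.mul_sum]
          exact Finset.sum_congr rfl fun s _ => by ring
      _ = a ⟨((p : ℕ) + ptm b (r : ℕ)) % b, Nat.mod_lt _ (by omega)⟩ :=
          M1_row_partial p (fun q' => a ⟨(q' + ptm b (r : ℕ)) % b, Nat.mod_lt _ (by omega)⟩)
      _ = a ⟨ptm b ((pke b N) (p, r) : ℕ), Nat.mod_lt _ (by omega)⟩ := by
          congr 1
          rw [Fin.ext_iff]
          show ((p : ℕ) + ptm b (r : ℕ)) % b = ptm b ((pke b N) (p, r) : ℕ)
          rw [pke_val]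
          unfold ptm
          rw [ptm_split hb p.isLt r.isLt, Nat.add_mod_mod]

lemma cstar_digit_zero {b : ℕ} (hb : 2 ≤ b) :
    ∀ (N : ℕ) (a : Fin b → ℂ), (∑ i, a i = 0) → ∀ n : Fin (b ^ N),
      (∃ i, dig b (n : ℕ) i = b - 1) → cstar b N a n = 0 := by
  intro N
  induction N with
  | zero =>
    rintro a ha n ⟨i, hi⟩
    exfalso
    have hn : (n : ℕ) = 0 := by have := n.isLt; simp only [pow_zero] at this; omega
    rw [hn] at hi
    simp [dig] at hi
    omega
  | succ N ih =>
    rintro a ha n ⟨i, hi⟩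
    obtain ⟨⟨p, r⟩, rfl⟩ := (pke b N).surjective n
    rw [pke_val] at hi
    simp only [cstar, Equiv.symm_apply_apply]
    rcases lt_trichotomy i N with h | h | h
    · have hd : dig b (r : ℕ) i = b - 1 := by rw [← dig_low hb h]; exact hi
      exact Finset.sum_eq_zero fun q _ =>
        ih (shiftA b q a) (shiftA_sum_zero hb a ha q) r ⟨i, hd⟩
    · subst h
      have hp : (p : ℕ) = b - 1 := by rw [dig_high hb p.isLt r.isLt] at hi; exact hi
      have hpb : (p : ℕ) + 1 = b := by omega
      rw [hpb]
      rw [← cstar_sum]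
      have hz : (fun i => ∑ q ∈ Finset.range b, shiftA b q a i) =
          (fun i => ∑ q ∈ (∅ : Finset ℕ), shiftA b q a i) := by
        funext i; rw [sum_shiftA_eq_zero hb a ha i]; simp
      rw [hz, cstar_sum]
      simp
    · exfalso
      have := dig_of_ge hb (pke b N (p, r)).isLt (by omega : N + 1 ≤ i)
      rw [pke_val] at this
      omega

lemma abel_lemma {R : Type*} [CommRing R] (f : ℕ → R) (y : R) :
    ∀ n : ℕ, (∑ p ∈ Finset.range n, y ^ p * (∑ q ∈ Finset.range (p + 1), f q)) * (1 - y)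
        + y ^ n * (∑ q ∈ Finset.range n, f q)
      = ∑ p ∈ Finset.range n, y ^ p * f p := by
  intro n
  induction n with
  | zero => simp
  | succ n ihn =>
    rw [Finset.sum_range_succ (n := n), Finset.sum_range_succ (f := fun q => f q) (n := n),
      Finset.sum_range_succ (f := fun p => y ^ p * f p) (n := n), ← ihn]
    ring

open Polynomial in
lemma coeff_extract {m : ℕ} (c : Fin m → ℂ) (n : Fin m) :
    (∑ k : Fin m, C (c k) * X ^ (k : ℕ)).coeff (n : ℕ) = c n := by
  rw [Polynomial.finset_sum_coeff]
  simp only [Polynomial.coeff_C_mul, Polynomial.coeff_X_pow]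
  rw [Finset.sum_eq_single n]
  · rw [if_pos rfl, mul_one]
  · intro k _ hk
    rw [if_neg (fun h => hk (Fin.ext h.symm)), mul_zero]
  · intro h
    exact absurd (Finset.mem_univ n) h

open Polynomial in
lemma Qprod_ne_zero {b N : ℕ} (hb : 2 ≤ b) :
    (∏ m ∈ Finset.range N, (1 - (X : ℂ[X]) ^ b ^ m)) ≠ 0 := by
  refine Finset.prod_ne_zero_iff.mpr fun m _ => fun h => ?_
  have h2 := congrArg (fun P : ℂ[X] => P.coeff (b ^ m)) h
  simp only [Polynomial.coeff_sub, Polynomial.coeff_one, Polynomial.coeff_X_pow,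
    Polynomial.coeff_zero] at h2
  simp at h2
  rw [if_neg (by omega)] at h2
  norm_num at h2

lemma cstar_zero_fun {b : ℕ} (N : ℕ) (r : Fin (b ^ N)) :
    cstar b N (fun _ => (0 : ℂ)) r = 0 := by
  have h := cstar_sum (b := b) N (∅ : Finset ℕ) (fun _ _ => (0 : ℂ)) r
  simpa using h

open Polynomial in
lemma polyid {b : ℕ} (hb : 2 ≤ b) :
    ∀ (N : ℕ) (a : Fin b → ℂ), (∑ i, a i = 0) →
      (∑ n : Fin (b ^ N), C (a ⟨ptm b (n : ℕ), Nat.mod_lt _ (by omega)⟩) * X ^ (n : ℕ)) =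
        (∑ n : Fin (b ^ N), C (cstar b N a n) * X ^ (n : ℕ)) *
          ∏ m ∈ Finset.range N, (1 - X ^ b ^ m) := by
  intro N
  induction N with
  | zero =>
    intro a ha
    rw [Finset.prod_range_zero, mul_one]
    refine Finset.sum_congr rfl fun n _ => ?_
    congr 2
    simp only [cstar]
    rw [dif_pos (by omega : 0 < b)]
    congr 1
    have hn : (n : ℕ) = 0 := by have := n.isLt; simp only [pow_zero] at this; omega
    rw [Fin.ext_iff]
    simp [hn, ptm]
  | succ N ih =>
    intro a ha
    set Q : ℂ[X] := ∏ m ∈ Finset.range N, (1 - X ^ b ^ m) with hQ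
    set Y : ℂ[X] := X ^ b ^ N with hY
    set Pp : ℕ → ℂ[X] :=
      fun q => ∑ r : Fin (b ^ N), C (cstar b N (shiftA b q a) r) * X ^ (r : ℕ) with hPp
    have hzero : ∑ q ∈ Finset.range b, Pp q = 0 := by
      rw [hPp, Finset.sum_comm]
      refine Finset.sum_eq_zero fun r _ => ?_
      rw [← Finset.sum_mul, ← map_sum, ← cstar_sum]
      have hz : (fun i => ∑ q ∈ Finset.range b, shiftA b q a i) = (fun _ => (0 : ℂ)) := by
        funext i; exact sum_shiftA_eq_zero hb a ha i
      rw [hz, cstar_zero_fun, map_zero, zero_mul]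
    have hL : (∑ n : Fin (b ^ (N + 1)),
          C (a ⟨ptm b (n : ℕ), Nat.mod_lt _ (by omega)⟩) * X ^ (n : ℕ))
        = ∑ p : Fin b, Y ^ (p : ℕ) * (Pp (p : ℕ) * Q) := by
      rw [← Equiv.sum_comp (pke b N) (fun n : Fin (b ^ (N + 1)) =>
        C (a ⟨ptm b (n : ℕ), Nat.mod_lt _ (by omega)⟩) * X ^ (n : ℕ)), Fintype.sum_prod_type]
      refine Finset.sum_congr rfl fun p _ => ?_
      have hterm : ∀ r : Fin (b ^ N),
          C (a ⟨ptm b ((pke b N) (p, r) : ℕ), Nat.mod_lt _ (by omega)⟩) *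
              X ^ ((pke b N) (p, r) : ℕ)
            = Y ^ (p : ℕ) *
              (C ((shiftA b (p : ℕ) a) ⟨ptm b (r : ℕ), Nat.mod_lt _ (by omega)⟩) *
                X ^ (r : ℕ)) := by
        intro r
        have hcoef : a ⟨ptm b ((pke b N) (p, r) : ℕ), Nat.mod_lt _ (by omega)⟩
            = (shiftA b (p : ℕ) a) ⟨ptm b (r : ℕ), Nat.mod_lt _ (by omega)⟩ := by
          unfold shiftA
          congr 1
          rw [Fin.ext_iff]
          show ptm b ((pke b N) (p, r) : ℕ) = ((p : ℕ) + ptm b (r : ℕ)) % b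
          rw [pke_val]
          unfold ptm
          rw [ptm_split hb p.isLt r.isLt, Nat.add_mod_mod]
        rw [hcoef, pke_val, pow_add, mul_comm ((p : ℕ)) (b ^ N), pow_mul, hY]
        ring
      rw [Finset.sum_congr rfl fun r _ => hterm r, ← Finset.mul_sum,
        ih (shiftA b (p : ℕ) a) (shiftA_sum_zero hb a ha (p : ℕ))]
    have hR : (∑ n : Fin (b ^ (N + 1)), C (cstar b (N + 1) a n) * X ^ (n : ℕ))
        = ∑ p : Fin b, Y ^ (p : ℕ) * (∑ q ∈ Finset.range ((p : ℕ) + 1), Pp q) := by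
      rw [← Equiv.sum_comp (pke b N) (fun n : Fin (b ^ (N + 1)) =>
        C (cstar b (N + 1) a n) * X ^ (n : ℕ)), Fintype.sum_prod_type]
      refine Finset.sum_congr rfl fun p _ => ?_
      have hterm : ∀ r : Fin (b ^ N),
          C (cstar b (N + 1) a ((pke b N) (p, r))) * X ^ ((pke b N) (p, r) : ℕ)
            = Y ^ (p : ℕ) * ∑ q ∈ Finset.range ((p : ℕ) + 1),
                C (cstar b N (shiftA b q a) r) * X ^ (r : ℕ) := by
        intro r
        have hcs : cstar b (N + 1) a ((pke b N) (p, r))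
            = ∑ q ∈ Finset.range ((p : ℕ) + 1), cstar b N (shiftA b q a) r := by
          simp only [cstar, Equiv.symm_apply_apply]
        rw [hcs, map_sum, pke_val, pow_add, mul_comm ((p : ℕ)) (b ^ N), pow_mul, hY,
          Finset.sum_mul, Finset.mul_sum]
        exact Finset.sum_congr rfl fun q _ => by ring
      rw [Finset.sum_congr rfl fun r _ => hterm r, ← Finset.mul_sum, Finset.sum_comm]
    rw [hL, hR, Finset.prod_range_succ, ← hQ, ← hY]
    have habel := abel_lemma Pp Y b
    rw [hzero, mul_zero, add_zero] at habel
    rw [Fin.sum_univ_eq_sum_range (fun p => Y ^ p * (Pp p * Q)) b,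
      Fin.sum_univ_eq_sum_range (fun p => Y ^ p * (∑ q ∈ Finset.range (p + 1), Pp q)) b]
    calc ∑ p ∈ Finset.range b, Y ^ p * (Pp p * Q)
        = (∑ p ∈ Finset.range b, Y ^ p * Pp p) * Q := by
          rw [Finset.sum_mul]; exact Finset.sum_congr rfl fun p _ => by ring
      _ = ((∑ p ∈ Finset.range b, Y ^ p * ∑ q ∈ Finset.range (p + 1), Pp q) * (1 - Y)) * Q := by
          rw [habel]
      _ = (∑ p ∈ Finset.range b, Y ^ p * ∑ q ∈ Finset.range (p + 1), Pp q) * (Q * (1 - Y)) := by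
          ring

def W1 (b : ℕ) : Matrix (Fin b) (Fin b) ℂ :=
  Matrix.of fun j k => if (k : ℕ) ≤ (j : ℕ) then 1 else 0

open Kronecker in
def Wmat (b : ℕ) : (N : ℕ) → Matrix (Fin (b ^ N)) (Fin (b ^ N)) ℂ
  | 0 => 1
  | N + 1 => Matrix.reindex (pke b N) (pke b N) (W1 b ⊗ₖ Wmat b N)

lemma W1_mul_M1 {b : ℕ} : W1 b * M1 b = 1 := by
  ext j k
  rw [Matrix.mul_apply]
  have key : ∀ l : Fin b, M1 b l k =
      (if l = k then 1 else 0) + (if (l : ℕ) = (k : ℕ) + 1 then -1 else 0) := by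
    intro l
    simp only [M1, Matrix.of_apply, Fin.ext_iff]
    split_ifs
    all_goals try ring
    all_goals exfalso; omega
  simp only [key, mul_add, mul_ite, mul_one, mul_neg, mul_zero, Finset.sum_add_distrib]
  rw [Finset.sum_ite_eq' Finset.univ k (fun l => W1 b j l), if_pos (Finset.mem_univ _)]
  by_cases hk : (k : ℕ) + 1 < b
  · rw [show (∑ l : Fin b, if (l : ℕ) = (k : ℕ) + 1 then -W1 b j l else 0)
        = ∑ l : Fin b, if l = (⟨(k : ℕ) + 1, hk⟩ : Fin b) then -W1 b j l else 0
      from Finset.sum_congr rfl fun l _ =>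
        if_congr (by rw [Fin.ext_iff]) rfl rfl]
    rw [Finset.sum_ite_eq' Finset.univ (⟨(k : ℕ) + 1, hk⟩ : Fin b)
      (fun l => -W1 b j l), if_pos (Finset.mem_univ _)]
    have hj := j.isLt
    have hkk := k.isLt
    simp only [W1, Matrix.of_apply, Matrix.one_apply, Fin.ext_iff]
    split_ifs
    all_goals try ring
    all_goals exfalso; omega
  · rw [Finset.sum_eq_zero (fun l _ => if_neg (by have := l.isLt; omega)), add_zero]
    have hj := j.isLt
    have hkk := k.isLt
    simp only [W1, Matrix.of_apply, Matrix.one_apply, Fin.ext_iff]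
    split_ifs
    all_goals try ring
    all_goals exfalso; omega

open Kronecker in
lemma Wmat_mul_Mmat {b : ℕ} : ∀ N, Wmat b N * Mmat b N = 1
  | 0 => by
    rw [show Wmat b 0 = 1 from rfl, show Mmat b 0 = 1 from rfl, one_mul]
  | N + 1 => by
    rw [show Wmat b (N + 1) = Matrix.reindex (pke b N) (pke b N) (W1 b ⊗ₖ Wmat b N) from rfl,
      show Mmat b (N + 1) = Matrix.reindex (pke b N) (pke b N) (M1 b ⊗ₖ Mmat b N) from rfl,
      Matrix.reindex_apply, Matrix.reindex_apply, Matrix.submatrix_mul_equiv,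
      ← Matrix.mul_kronecker_mul, W1_mul_M1, Wmat_mul_Mmat N, Matrix.one_kronecker_one,
      Matrix.submatrix_one_equiv]


/-- For `b ≥ 2`, `N ≥ 1`, a zero-sum vector `A = (a_0, …, a_{b-1})` of complex numbers and any
vector `c = (c_0, …, c_{b^N-1})` of complex numbers with associated polynomial
`P(x) = ∑_{n<b^N} c_n x^n`, the polynomial identity
`∑_{n<b^N} a_{u_b(n)} x^n = P(x) · ∏_{m<N} (1 - x^{b^m})` holds if and only if both
`(a_{u_b(n)})_n = M_N c` and `c_n = 0` for every `n` whose base-`b` expansion contains the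
digit `b-1`. -/
theorem ptm_matrix_equation (b N : ℕ) (hb : 2 ≤ b) (hN : 1 ≤ N)
    (a : Fin b → ℂ) (ha : ∑ i, a i = 0) (c : Fin (b ^ N) → ℂ) :
    ((∑ n : Fin (b ^ N),
        Polynomial.C (a ⟨ptm b n, Nat.mod_lt _ (by omega)⟩) * Polynomial.X ^ (n : ℕ)) =
      (∑ n : Fin (b ^ N), Polynomial.C (c n) * Polynomial.X ^ (n : ℕ)) *
        ∏ m ∈ Finset.range N, (1 - Polynomial.X ^ b ^ m)) ↔
    ((Mmat b N).mulVec c = fun n : Fin (b ^ N) => a ⟨ptm b (n : ℕ), Nat.mod_lt _ (by omega)⟩) ∧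
      ∀ n : Fin (b ^ N), (∃ i, dig b n i = b - 1) → c n = 0 := by
  constructor
  · intro h
    have h2 := polyid hb N a ha
    have hPc : (∑ n : Fin (b ^ N), Polynomial.C (c n) * Polynomial.X ^ (n : ℕ)) =
        ∑ n : Fin (b ^ N), Polynomial.C (cstar b N a n) * Polynomial.X ^ (n : ℕ) :=
      mul_right_cancel₀ (Qprod_ne_zero hb) (h.symm.trans h2)
    have hc : c = cstar b N a := by
      funext n
      rw [← coeff_extract c n, hPc, coeff_extract]
    rw [hc]
    exact ⟨Mmat_mulVec_cstar hb N a, fun n hn => cstar_digit_zero hb N a ha n hn⟩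
  · rintro ⟨h1, -⟩
    have h2 := Mmat_mulVec_cstar hb N a
    have hc : c = cstar b N a := by
      have h3 : (Mmat b N).mulVec c = (Mmat b N).mulVec (cstar b N a) := h1.trans h2.symm
      have h4 := congrArg (fun v => (Wmat b N).mulVec v) h3
      simpa [Matrix.mulVec_mulVec, Wmat_mul_Mmat, Matrix.one_mulVec] using h4
    rw [hc]
    exact polyid hb N a ha
end
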